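/- arXiv:2511.01765 — 2 statements merged into one kernel-verified Lean document; each statement's English description precedes it below -/
import Mathlib

section
/- Let U ⊂ ℝ^n be a measurable set, 1/p = 1/p₁ + 1/p₂ with p, p₁, p₂ ∈ [1,∞), and 1/q ≤ 1/q₁ + 1/q₂ with q, q₁, q₂ ∈ [1,∞]. If f₁ ∈ L^{p₁,q₁}(U) and f₂ ∈ L^{p₂,q₂}(U), then f₁f₂ ∈ L^{p,q}(U) and |f₁f₂|_{L^{p,q}} ≤ C(p₁,p₂,q₁,q₂) |f₁|_{L^{p₁,q₁}} |f₂|_{L^{p₂,q₂}}. -/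
open MeasureTheory ENNReal

noncomputable section

/-- The distribution function `d_f(s) = μ{ |f| > s }`. -/
def distFn {α : Type*} [MeasurableSpace α] (μ : Measure α) (f : α → ℝ) (s : ℝ≥0∞) : ℝ≥0∞ :=
  μ {x | s < (‖f x‖₊ : ℝ≥0∞)}

/-- The decreasing rearrangement `f*(t) = inf{ s : d_f(s) ≤ t }`. -/
def rearr {α : Type*} [MeasurableSpace α] (μ : Measure α) (f : α → ℝ) (t : ℝ≥0∞) : ℝ≥0∞ :=
  sInf {s : ℝ≥0∞ | distFn μ f s ≤ t}

/-- The Lorentz quasinorm `|f|_{L^{p,q}(μ)} = ‖ t^{1/p} f*(t) ‖_{L^q((0,∞), dt/t)}`,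
for `1 ≤ p < ∞` and `1 ≤ q ≤ ∞`. -/
def lorentzNorm {α : Type*} [MeasurableSpace α] (p : ℝ) (q : ℝ≥0∞) (μ : Measure α)
    (f : α → ℝ) : ℝ≥0∞ :=
  if q = ⊤ then
    ⨆ t : {t : ℝ // 0 < t},
      ENNReal.ofReal ((t : ℝ) ^ (1 / p)) * rearr μ f (ENNReal.ofReal (t : ℝ))
  else
    (∫⁻ t in Set.Ioi (0 : ℝ),
        (ENNReal.ofReal (t ^ (1 / p)) * rearr μ f (ENNReal.ofReal t)) ^ q.toReal
          / ENNReal.ofReal t) ^ (1 / q.toReal)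

section Lemmas

variable {α : Type*} [MeasurableSpace α] (μ : Measure α) (f : α → ℝ)

lemma distFn_anti : Antitone (distFn μ f) := fun _ _ h =>
  measure_mono (fun _ hx => lt_of_le_of_lt h hx)

lemma rearr_anti : Antitone (rearr μ f) := fun _ _ h =>
  sInf_le_sInf (fun _ hs => le_trans hs h)

lemma rearr_set_nonempty (t : ℝ≥0∞) : {s : ℝ≥0∞ | distFn μ f s ≤ t}.Nonempty := by
  refine ⟨⊤, ?_⟩
  have : {x | (⊤:ℝ≥0∞) < (‖f x‖₊ : ℝ≥0∞)} = ∅ := by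
    ext x; simp
  simp [distFn, Set.mem_setOf_eq, this]

lemma distFn_rearr_le (t : ℝ≥0∞) : distFn μ f (rearr μ f t) ≤ t := by
  set S := {s : ℝ≥0∞ | distFn μ f s ≤ t} with hS
  obtain ⟨u, hu_anti, hu_tendsto, hu_mem⟩ :=
    exists_seq_tendsto_sInf (rearr_set_nonempty μ f t) (OrderBot.bddBelow S)
  have hset : {x | rearr μ f t < (‖f x‖₊ : ℝ≥0∞)} = ⋃ n, {x | u n < (‖f x‖₊ : ℝ≥0∞)} := by
    ext x
    simp only [Set.mem_setOf_eq, Set.mem_iUnion]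
    constructor
    · intro h
      exact (hu_tendsto.eventually_lt_const h).exists
    · rintro ⟨n, hn⟩
      exact lt_of_le_of_lt (sInf_le (hu_mem n)) hn
  have hmono : Monotone (fun n => {x | u n < (‖f x‖₊ : ℝ≥0∞)}) := by
    intro m n hmn x hx
    exact lt_of_le_of_lt (hu_anti hmn) hx
  calc distFn μ f (rearr μ f t) = μ (⋃ n, {x | u n < (‖f x‖₊ : ℝ≥0∞)}) := by
        rw [distFn, hset]
    _ = ⨆ n, μ {x | u n < (‖f x‖₊ : ℝ≥0∞)} := hmono.measure_iUnion
    _ ≤ t := iSup_le fun n => hu_mem n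

lemma rearr_mul_le (f₁ f₂ : α → ℝ) (t₁ t₂ : ℝ≥0∞) :
    rearr μ (fun x => f₁ x * f₂ x) (t₁ + t₂) ≤ rearr μ f₁ t₁ * rearr μ f₂ t₂ := by
  apply sInf_le
  have hsub : {x | rearr μ f₁ t₁ * rearr μ f₂ t₂ < (‖f₁ x * f₂ x‖₊ : ℝ≥0∞)} ⊆
      {x | rearr μ f₁ t₁ < (‖f₁ x‖₊ : ℝ≥0∞)} ∪ {x | rearr μ f₂ t₂ < (‖f₂ x‖₊ : ℝ≥0∞)} := by
    intro x hx
    by_contra hcon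
    simp only [Set.mem_union, Set.mem_setOf_eq, not_lt, not_or] at hcon
    have : (‖f₁ x * f₂ x‖₊ : ℝ≥0∞) ≤ rearr μ f₁ t₁ * rearr μ f₂ t₂ := by
      rw [nnnorm_mul, ENNReal.coe_mul]
      exact mul_le_mul' hcon.1 hcon.2
    exact absurd hx (not_lt.mpr this)
  calc distFn μ (fun x => f₁ x * f₂ x) (rearr μ f₁ t₁ * rearr μ f₂ t₂)
      ≤ μ ({x | rearr μ f₁ t₁ < (‖f₁ x‖₊ : ℝ≥0∞)} ∪ {x | rearr μ f₂ t₂ < (‖f₂ x‖₊ : ℝ≥0∞)}) :=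
        measure_mono hsub
    _ ≤ distFn μ f₁ (rearr μ f₁ t₁) + distFn μ f₂ (rearr μ f₂ t₂) := measure_union_le _ _
    _ ≤ t₁ + t₂ := add_le_add (distFn_rearr_le μ f₁ t₁) (distFn_rearr_le μ f₂ t₂)

lemma rearr_comp_antitone : Antitone (fun t : ℝ => rearr μ f (ENNReal.ofReal t)) :=
  fun _ _ h => rearr_anti μ f (ENNReal.ofReal_le_ofReal h)

lemma rearr_comp_measurable : Measurable (fun t : ℝ => rearr μ f (ENNReal.ofReal t)) :=
  (rearr_comp_antitone μ f).measurable

/-- The function whose `L^q(dt/t)` norm is the Lorentz norm. -/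
def lorG {α : Type*} [MeasurableSpace α] (μ : Measure α) (f : α → ℝ) (p : ℝ) (t : ℝ) : ℝ≥0∞ :=
  ENNReal.ofReal (t ^ (1 / p)) * rearr μ f (ENNReal.ofReal t)

lemma lorG_measurable {p : ℝ} (hp : 1 ≤ p) : Measurable (lorG μ f p) := by
  apply Measurable.mul
  · exact (Real.continuous_rpow_const (by positivity)).measurable.ennreal_ofReal
  · exact rearr_comp_measurable μ f

lemma lorentzNorm_eq_top (p : ℝ) : lorentzNorm p ⊤ μ f = ⨆ t : {t : ℝ // 0 < t}, lorG μ f p t := by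
  simp [lorentzNorm, lorG]

lemma lorentzNorm_eq (p : ℝ) {q : ℝ≥0∞} (hq : q ≠ ⊤) :
    lorentzNorm p q μ f =
      (∫⁻ t in Set.Ioi (0 : ℝ), (lorG μ f p t) ^ q.toReal / ENNReal.ofReal t) ^ (1 / q.toReal) := by
  simp [lorentzNorm, hq, lorG]

lemma ofReal_rpow_split {p t : ℝ} (hp : 1 ≤ p) (ht : 0 < t) :
    ENNReal.ofReal (t ^ (1/p)) = (2 : ℝ≥0∞) ^ (1/p) * ENNReal.ofReal ((t/2) ^ (1/p)) := by
  rw [show t = 2 * (t/2) by ring, Real.mul_rpow (by norm_num) (by positivity),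
    ENNReal.ofReal_mul (by positivity), ← ENNReal.ofReal_rpow_of_pos (by norm_num)]
  norm_num [mul_div_assoc]

/-- `t^{1/p} f^*(t) ≤ 2^{1/p} · 2 · ‖f‖_{p,q}` for every `t > 0`. -/
lemma lorG_le_lorentzNorm {p : ℝ} (hp : 1 ≤ p) {q : ℝ≥0∞} (hq : 1 ≤ q) {t : ℝ} (ht : 0 < t) :
    lorG μ f p t ≤ (2 : ℝ≥0∞) ^ (1 / p) * 2 * lorentzNorm p q μ f := by
  have hp0 : (0:ℝ) < 1 / p := by positivity
  have hsplit := ofReal_rpow_split (t := t) hp ht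
  by_cases hqtop : q = ⊤
  · subst hqtop
    rw [lorentzNorm_eq_top]
    have h1 : lorG μ f p t ≤ ⨆ t : {t : ℝ // 0 < t}, lorG μ f p t :=
      le_iSup (fun t : {t : ℝ // 0 < t} => lorG μ f p (t:ℝ)) ⟨t, ht⟩
    have h2 : (1 : ℝ≥0∞) ≤ (2 : ℝ≥0∞) ^ (1 / p) * 2 := by
      have : (1:ℝ≥0∞) = (2:ℝ≥0∞) ^ (0:ℝ) * 1 := by simp
      rw [this]
      exact mul_le_mul' (ENNReal.rpow_le_rpow_of_exponent_le (by norm_num) hp0.le) (by norm_num)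
    calc lorG μ f p t ≤ ⨆ t : {t : ℝ // 0 < t}, lorG μ f p t := h1
      _ = 1 * (⨆ t : {t : ℝ // 0 < t}, lorG μ f p t) := (one_mul _).symm
      _ ≤ _ := mul_le_mul' h2 le_rfl
  · set Q := q.toReal with hQ
    have hQ1 : 1 ≤ Q := by
      rw [hQ, ← ENNReal.toReal_one]
      exact ENNReal.toReal_mono hqtop hq
    have hQ0 : 0 < Q := by linarith
    set c : ℝ≥0∞ := ENNReal.ofReal ((t/2) ^ (1/p)) * rearr μ f (ENNReal.ofReal t) with hc
    set I : ℝ≥0∞ := ∫⁻ s in Set.Ioi (0 : ℝ), (lorG μ f p s) ^ Q / ENNReal.ofReal s with hI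
    have hmeas : Measurable fun s => (lorG μ f p s) ^ Q / ENNReal.ofReal s :=
      ((lorG_measurable μ f hp).pow_const Q).div measurable_ofReal
    have hlow : ∀ s ∈ Set.Ioo (t/2) t, c ^ Q * (ENNReal.ofReal t)⁻¹ ≤
        (lorG μ f p s) ^ Q / ENNReal.ofReal s := by
      intro s hs
      have hcs : c ≤ lorG μ f p s := by
        apply mul_le_mul'
        · exact ENNReal.ofReal_le_ofReal (Real.rpow_le_rpow (by positivity) hs.1.le hp0.le)
        · exact rearr_anti μ f (ENNReal.ofReal_le_ofReal hs.2.le)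
      have hinv : (ENNReal.ofReal t)⁻¹ ≤ (ENNReal.ofReal s)⁻¹ :=
        ENNReal.inv_le_inv.mpr (ENNReal.ofReal_le_ofReal hs.2.le)
      rw [div_eq_mul_inv]
      exact mul_le_mul' (ENNReal.rpow_le_rpow hcs hQ0.le) hinv
    have hIlow : c ^ Q * 2⁻¹ ≤ I := by
      have h1 : ∫⁻ s in Set.Ioo (t/2) t, (c ^ Q * (ENNReal.ofReal t)⁻¹) ≤
          ∫⁻ s in Set.Ioo (t/2) t, (lorG μ f p s) ^ Q / ENNReal.ofReal s :=
        setLIntegral_mono hmeas hlow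
      have h2 : ∫⁻ s in Set.Ioo (t/2) t, (lorG μ f p s) ^ Q / ENNReal.ofReal s ≤ I :=
        lintegral_mono_set (fun s hs => lt_trans (by positivity) hs.1)
      have h3 : (∫⁻ _ in Set.Ioo (t/2) t, (c ^ Q * (ENNReal.ofReal t)⁻¹)) =
          c ^ Q * (ENNReal.ofReal t)⁻¹ * ENNReal.ofReal (t/2) := by
        rw [setLIntegral_const, Real.volume_Ioo, show t - t/2 = t/2 by ring]
      have h4 : c ^ Q * (ENNReal.ofReal t)⁻¹ * ENNReal.ofReal (t/2) = c ^ Q * 2⁻¹ := by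
        rw [show t/2 = t * (1/2) by ring, ENNReal.ofReal_mul ht.le, mul_comm (ENNReal.ofReal t)]
        rw [mul_assoc, mul_comm ((ENNReal.ofReal t)⁻¹), mul_assoc]
        rw [ENNReal.mul_inv_cancel (by positivity) ENNReal.ofReal_ne_top, mul_one]
        congr 1
        rw [ENNReal.ofReal_div_of_pos (by norm_num)]
        simp
      rw [← h4, ← h3]
      exact le_trans h1 h2
    have hc2I : c ≤ 2 * I ^ (1/Q) := by
      have hcQ : c ^ Q ≤ 2 * I := by
        calc c ^ Q = c ^ Q * 2⁻¹ * 2 := by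
              rw [mul_assoc, ENNReal.inv_mul_cancel (by norm_num) (by norm_num), mul_one]
          _ ≤ I * 2 := mul_le_mul' hIlow le_rfl
          _ = 2 * I := mul_comm _ _
      calc c = (c ^ Q) ^ (1/Q) := by
            rw [← ENNReal.rpow_mul, mul_one_div, div_self hQ0.ne', ENNReal.rpow_one]
        _ ≤ (2 * I) ^ (1/Q) := ENNReal.rpow_le_rpow hcQ (by positivity)
        _ = 2 ^ (1/Q) * I ^ (1/Q) := ENNReal.mul_rpow_of_nonneg _ _ (by positivity)
        _ ≤ 2 ^ (1:ℝ) * I ^ (1/Q) := by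
            exact mul_le_mul' (ENNReal.rpow_le_rpow_of_exponent_le (by norm_num)
              (by rw [div_le_one hQ0]; exact hQ1)) le_rfl
        _ = 2 * I ^ (1/Q) := by rw [ENNReal.rpow_one]
    rw [lorentzNorm_eq μ f p hqtop, ← hQ, ← hI]
    calc lorG μ f p t = (2:ℝ≥0∞) ^ (1/p) * c := by
          rw [lorG, hsplit, hc, mul_assoc]
      _ ≤ (2:ℝ≥0∞) ^ (1/p) * (2 * I ^ (1/Q)) := mul_le_mul' le_rfl hc2I
      _ = (2:ℝ≥0∞) ^ (1/p) * 2 * I ^ (1/Q) := by rw [mul_assoc]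

/-- Pointwise submultiplicativity `t^{1/p}(f₁f₂)^*(t) ≤ H₁(t)·H₂(t)`. -/
lemma lorG_mul_le (f₁ f₂ : α → ℝ) {p p₁ p₂ : ℝ}
    (hp₁ : 1 ≤ p₁) (hp₂ : 1 ≤ p₂) (hpp : 1/p = 1/p₁ + 1/p₂) {t : ℝ} (ht : 0 < t) :
    lorG μ (fun x => f₁ x * f₂ x) p t ≤
      ((2:ℝ≥0∞) ^ (1/p₁) * lorG μ f₁ p₁ (t/2)) * ((2:ℝ≥0∞) ^ (1/p₂) * lorG μ f₂ p₂ (t/2)) := by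
  have hre : rearr μ (fun x => f₁ x * f₂ x) (ENNReal.ofReal t) ≤
      rearr μ f₁ (ENNReal.ofReal (t/2)) * rearr μ f₂ (ENNReal.ofReal (t/2)) := by
    rw [show ENNReal.ofReal t = ENNReal.ofReal (t/2) + ENNReal.ofReal (t/2) by
      rw [← ENNReal.ofReal_add (by positivity) (by positivity)]; norm_num]
    exact rearr_mul_le μ f₁ f₂ _ _
  have hsc : ENNReal.ofReal (t ^ (1/p)) =
      ((2:ℝ≥0∞) ^ (1/p₁) * ENNReal.ofReal ((t/2) ^ (1/p₁))) *
      ((2:ℝ≥0∞) ^ (1/p₂) * ENNReal.ofReal ((t/2) ^ (1/p₂))) := by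
    calc ENNReal.ofReal (t ^ (1/p))
        = ENNReal.ofReal (t ^ (1/p₁)) * ENNReal.ofReal (t ^ (1/p₂)) := by
          rw [hpp, Real.rpow_add ht, ENNReal.ofReal_mul (by positivity)]
      _ = _ := by rw [ofReal_rpow_split hp₁ ht, ofReal_rpow_split hp₂ ht]
  calc lorG μ (fun x => f₁ x * f₂ x) p t
      = (((2:ℝ≥0∞) ^ (1/p₁) * ENNReal.ofReal ((t/2) ^ (1/p₁))) *
        ((2:ℝ≥0∞) ^ (1/p₂) * ENNReal.ofReal ((t/2) ^ (1/p₂)))) *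
        rearr μ (fun x => f₁ x * f₂ x) (ENNReal.ofReal t) := by rw [lorG, hsc]
    _ ≤ (((2:ℝ≥0∞) ^ (1/p₁) * ENNReal.ofReal ((t/2) ^ (1/p₁))) *
        ((2:ℝ≥0∞) ^ (1/p₂) * ENNReal.ofReal ((t/2) ^ (1/p₂)))) *
        (rearr μ f₁ (ENNReal.ofReal (t/2)) * rearr μ f₂ (ENNReal.ofReal (t/2))) :=
          mul_le_mul' le_rfl hre
    _ = _ := by rw [lorG, lorG]; ring

end Lemmas

/-- change of variables `t → 2t` for the scale-invariant measure `dt/t`. -/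
lemma lintegral_div_half (F : ℝ → ℝ≥0∞) (hF : Measurable F) :
    ∫⁻ t in Set.Ioi (0:ℝ), F (t/2) / ENNReal.ofReal t
      = ∫⁻ t in Set.Ioi (0:ℝ), F t / ENNReal.ofReal t := by
  set G : ℝ → ℝ≥0∞ := fun u => F u / ENNReal.ofReal (2*u) with hG
  have hGmeas : Measurable G := hF.div ((measurable_id.const_mul 2).ennreal_ofReal)
  have hT : Measurable (fun t : ℝ => t/2) := measurable_id.div_const 2
  have hTmul : (fun t : ℝ => t/2) = ((2⁻¹ : ℝ) * ·) := funext fun t => by ring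
  have hpre : (fun t : ℝ => t/2) ⁻¹' (Set.Ioi 0) = Set.Ioi 0 := by
    ext x
    simp only [Set.mem_preimage, Set.mem_Ioi]
    constructor <;> intro h <;> linarith
  have step1 : ∫⁻ t in Set.Ioi (0:ℝ), F (t/2) / ENNReal.ofReal t
      = ∫⁻ t in Set.Ioi (0:ℝ), G (t/2) := by
    apply lintegral_congr
    intro t
    simp only [hG]
    rw [show 2*(t/2) = t by ring]
  have step2 : ∫⁻ t in Set.Ioi (0:ℝ), G (t/2)
      = ∫⁻ u, G u ∂(Measure.map (fun t : ℝ => t/2) (volume.restrict (Set.Ioi 0))) :=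
    (lintegral_map hGmeas hT).symm
  have step3 : Measure.map (fun t : ℝ => t/2) (volume.restrict (Set.Ioi 0))
      = (2 : ℝ≥0∞) • (volume.restrict (Set.Ioi 0)) := by
    have := Measure.restrict_map (μ := volume) hT (measurableSet_Ioi (a := (0:ℝ)))
    rw [hpre] at this
    rw [← this, hTmul, Real.map_volume_mul_left (by norm_num : (2⁻¹:ℝ) ≠ 0)]
    rw [Measure.restrict_smul]
    norm_num
  have step4 : ∫⁻ u, G u ∂((2 : ℝ≥0∞) • (volume.restrict (Set.Ioi 0)))
      = ∫⁻ u in Set.Ioi (0:ℝ), 2 * G u := by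
    rw [lintegral_smul_measure, smul_eq_mul, ← lintegral_const_mul' _ _ (by norm_num : (2:ℝ≥0∞) ≠ ⊤)]
  have step5 : ∫⁻ u in Set.Ioi (0:ℝ), 2 * G u = ∫⁻ u in Set.Ioi (0:ℝ), F u / ENNReal.ofReal u := by
    apply setLIntegral_congr_fun measurableSet_Ioi
    intro u hu
    simp only [hG]
    rw [ENNReal.ofReal_mul (by norm_num : (0:ℝ) ≤ 2)]
    rw [div_eq_mul_inv, ENNReal.mul_inv (Or.inl (by norm_num)) (Or.inl (by norm_num)),
      div_eq_mul_inv]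
    calc 2 * (F u * ((ENNReal.ofReal 2)⁻¹ * (ENNReal.ofReal u)⁻¹))
        = (2 * (ENNReal.ofReal 2)⁻¹) * (F u * (ENNReal.ofReal u)⁻¹) := by ring
      _ = F u * (ENNReal.ofReal u)⁻¹ := by
          rw [show ENNReal.ofReal 2 = (2:ℝ≥0∞) by norm_num,
            ENNReal.mul_inv_cancel (by norm_num) (by norm_num), one_mul]
  rw [step1, step2, step3, step4, step5]

/-- The measure `dt/t` on `(0,∞)`. -/
def nuMeas : Measure ℝ :=
  (volume.restrict (Set.Ioi (0:ℝ))).withDensity fun t => (ENNReal.ofReal t)⁻¹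

lemma lintegral_nuMeas (F : ℝ → ℝ≥0∞) (hF : Measurable F) :
    ∫⁻ t, F t ∂nuMeas = ∫⁻ t in Set.Ioi (0:ℝ), F t / ENNReal.ofReal t := by
  rw [nuMeas, lintegral_withDensity_eq_lintegral_mul _ (f := fun t : ℝ => (ENNReal.ofReal t)⁻¹) (measurable_ofReal.inv) hF]
  exact lintegral_congr fun t => by rw [Pi.mul_apply, div_eq_mul_inv, mul_comm]

lemma nuMeas_ae_pos : ∀ᵐ t ∂nuMeas, 0 < t := by
  have h0 : ∀ᵐ t ∂(volume.restrict (Set.Ioi (0:ℝ))), 0 < t :=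
    ae_restrict_mem measurableSet_Ioi
  exact h0.filter_mono (withDensity_absolutelyContinuous _ _).ae_le

lemma tail_lemma {ν : Measure ℝ} {G₀ H₁ H₂ : ℝ → ℝ≥0∞} {M D : ℝ≥0∞} {Q r : ℝ}
    (hr0 : 0 ≤ r) (hrQ : r ≤ Q) (hM : M ≠ ⊤)
    (hGH : ∀ᵐ t ∂ν, G₀ t ≤ H₁ t * H₂ t)
    (hb : ∀ᵐ t ∂ν, H₁ t * H₂ t ≤ M)
    (hhol : ∫⁻ t, (H₁ t * H₂ t) ^ r ∂ν ≤ D) :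
    ∫⁻ t, G₀ t ^ Q ∂ν ≤ M ^ (Q - r) * D := by
  have step1 : ∫⁻ t, G₀ t ^ Q ∂ν ≤ ∫⁻ t, M ^ (Q-r) * (H₁ t * H₂ t) ^ r ∂ν := by
    apply lintegral_mono_ae
    filter_upwards [hGH, hb] with t h1 h2
    calc G₀ t ^ Q ≤ (H₁ t * H₂ t) ^ Q := ENNReal.rpow_le_rpow h1 (le_trans hr0 hrQ)
      _ = (H₁ t * H₂ t) ^ (Q - r) * (H₁ t * H₂ t) ^ r := by
          rw [← ENNReal.rpow_add_of_nonneg _ _ (by linarith) hr0, sub_add_cancel]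
      _ ≤ M ^ (Q-r) * (H₁ t * H₂ t) ^ r :=
          mul_le_mul' (ENNReal.rpow_le_rpow h2 (by linarith)) le_rfl
  rw [lintegral_const_mul' _ _ (ENNReal.rpow_ne_top_of_nonneg (by linarith) hM)] at step1
  exact le_trans step1 (mul_le_mul' le_rfl hhol)

lemma finish_lemma {I A₁ A₂ E K : ℝ≥0∞} {Q r : ℝ} (hQ0 : 0 < Q) (hr0 : 0 ≤ r) (hrQ : r ≤ Q)
    (hI : I ≤ (K * (A₁ * A₂)) ^ (Q - r) * (E * (A₁ ^ r * A₂ ^ r))) :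
    I ^ (1/Q) ≤ (K ^ (Q-r) * E) ^ (1/Q) * A₁ * A₂ := by
  have hQr : (0:ℝ) ≤ Q - r := by linarith
  have hexp : I ≤ (K ^ (Q-r) * E) * (A₁ ^ Q * A₂ ^ Q) := by
    refine le_trans hI (le_of_eq ?_)
    rw [ENNReal.mul_rpow_of_nonneg _ _ hQr, ENNReal.mul_rpow_of_nonneg _ _ hQr]
    rw [show Q = (Q - r) + r by ring, ENNReal.rpow_add_of_nonneg _ _ hQr hr0,
      ENNReal.rpow_add_of_nonneg _ _ hQr hr0]
    ring_nf
  calc I ^ (1/Q) ≤ ((K ^ (Q-r) * E) * (A₁ ^ Q * A₂ ^ Q)) ^ (1/Q) :=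
        ENNReal.rpow_le_rpow hexp (by positivity)
    _ = (K ^ (Q-r) * E) ^ (1/Q) * A₁ * A₂ := by
        rw [ENNReal.mul_rpow_of_nonneg (K ^ (Q-r) * E) _ (by positivity),
          ENNReal.mul_rpow_of_nonneg (A₁ ^ Q) _ (by positivity)]
        rw [← ENNReal.rpow_mul A₁, ← ENNReal.rpow_mul A₂, mul_one_div, div_self hQ0.ne',
          ENNReal.rpow_one, ENNReal.rpow_one, mul_assoc]

end

noncomputable section Main

/-- value of `∫ H_i^{q_i} dν`. -/
lemma J_lemma {α : Type*} [MeasurableSpace α] (μ : Measure α) (f : α → ℝ) {p₁ : ℝ}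
    (hp₁ : 1 ≤ p₁) {q₁ : ℝ≥0∞} (hq₁ : 1 ≤ q₁) (hq₁t : q₁ ≠ ⊤) :
    ∫⁻ t, ((2:ℝ≥0∞) ^ (1/p₁) * lorG μ f p₁ (t/2)) ^ q₁.toReal ∂nuMeas
      = ((2:ℝ≥0∞) ^ (1/p₁)) ^ q₁.toReal * (lorentzNorm p₁ q₁ μ f) ^ q₁.toReal := by
  set Q₁ := q₁.toReal with hQ₁def
  have hQ₁1 : 1 ≤ Q₁ := by
    rw [hQ₁def, ← ENNReal.toReal_one]
    exact ENNReal.toReal_mono hq₁t hq₁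
  have hQ₁0 : 0 < Q₁ := by linarith
  have h2ne : ((2:ℝ≥0∞) ^ (1/p₁)) ^ Q₁ ≠ ⊤ :=
    ENNReal.rpow_ne_top_of_nonneg hQ₁0.le
      (ENNReal.rpow_ne_top_of_nonneg (by positivity) (by norm_num))
  set F₁ : ℝ → ℝ≥0∞ := fun t => (lorG μ f p₁ t) ^ Q₁ with hF₁def
  have hF₁meas : Measurable F₁ := (lorG_measurable μ f hp₁).pow_const Q₁
  have hF₁half : Measurable (fun t => F₁ (t/2)) := hF₁meas.comp (measurable_id.div_const 2)
  have hint : ∫⁻ t, F₁ (t/2) ∂nuMeas = ∫⁻ t, F₁ t ∂nuMeas := by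
    rw [lintegral_nuMeas _ hF₁half, lintegral_nuMeas _ hF₁meas, lintegral_div_half _ hF₁meas]
  have hval : ∫⁻ t, F₁ t ∂nuMeas = (lorentzNorm p₁ q₁ μ f) ^ Q₁ := by
    rw [lintegral_nuMeas _ hF₁meas, lorentzNorm_eq μ f p₁ hq₁t, ← ENNReal.rpow_mul,
      one_div_mul_cancel hQ₁0.ne', ENNReal.rpow_one]
  calc ∫⁻ t, ((2:ℝ≥0∞) ^ (1/p₁) * lorG μ f p₁ (t/2)) ^ Q₁ ∂nuMeas
      = ∫⁻ t, ((2:ℝ≥0∞) ^ (1/p₁)) ^ Q₁ * F₁ (t/2) ∂nuMeas :=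
        lintegral_congr fun t => ENNReal.mul_rpow_of_nonneg _ _ hQ₁0.le
    _ = ((2:ℝ≥0∞) ^ (1/p₁)) ^ Q₁ * ∫⁻ t, F₁ (t/2) ∂nuMeas := lintegral_const_mul' _ _ h2ne
    _ = _ := by rw [hint, hval]

lemma core_lemma (p p₁ p₂ : ℝ) (q q₁ q₂ : ℝ≥0∞)
    (hp₁ : 1 ≤ p₁) (hp₂ : 1 ≤ p₂) (hp : 1 ≤ p)
    (hpp : 1 / p = 1 / p₁ + 1 / p₂)
    (hq₁ : 1 ≤ q₁) (hq₂ : 1 ≤ q₂) (hq : 1 ≤ q) (hqt : q ≠ ⊤)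
    (r : ℝ) (E : ℝ≥0∞) (hr0 : 0 ≤ r) (hrQ : r ≤ q.toReal) (hEne : E ≠ ⊤)
    (hhol : ∀ (α : Type) (_ : MeasurableSpace α) (μ : Measure α) (f₁ f₂ : α → ℝ),
      lorentzNorm p₁ q₁ μ f₁ ≠ ⊤ → lorentzNorm p₂ q₂ μ f₂ ≠ ⊤ →
      ∫⁻ t, (((2:ℝ≥0∞) ^ (1/p₁) * lorG μ f₁ p₁ (t/2)) *
             ((2:ℝ≥0∞) ^ (1/p₂) * lorG μ f₂ p₂ (t/2))) ^ r ∂nuMeas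
        ≤ E * (lorentzNorm p₁ q₁ μ f₁ ^ r * lorentzNorm p₂ q₂ μ f₂ ^ r)) :
    ∃ C : ℝ≥0∞, C ≠ ⊤ ∧ ∀ (α : Type) (_ : MeasurableSpace α) (μ : Measure α) (f₁ f₂ : α → ℝ),
      lorentzNorm p₁ q₁ μ f₁ ≠ ⊤ → lorentzNorm p₂ q₂ μ f₂ ≠ ⊤ →
      lorentzNorm p q μ (fun x => f₁ x * f₂ x) ≤
        C * lorentzNorm p₁ q₁ μ f₁ * lorentzNorm p₂ q₂ μ f₂ := by
  have h2ne : ∀ y : ℝ, 0 ≤ y → ((2:ℝ≥0∞) ^ y ≠ ⊤) := fun y hy =>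
    ENNReal.rpow_ne_top_of_nonneg hy (by norm_num)
  set Q := q.toReal with hQdef
  have hQ1 : 1 ≤ Q := by
    rw [hQdef, ← ENNReal.toReal_one]
    exact ENNReal.toReal_mono hqt hq
  have hQ0 : 0 < Q := by linarith
  set K₁ : ℝ≥0∞ := (2:ℝ≥0∞) ^ (1/p₁) * ((2:ℝ≥0∞) ^ (1/p₁) * 2) with hK₁def
  set K₂ : ℝ≥0∞ := (2:ℝ≥0∞) ^ (1/p₂) * ((2:ℝ≥0∞) ^ (1/p₂) * 2) with hK₂def
  have hK₁ne : K₁ ≠ ⊤ := ENNReal.mul_ne_top (h2ne _ (by positivity))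
    (ENNReal.mul_ne_top (h2ne _ (by positivity)) (by norm_num))
  have hK₂ne : K₂ ≠ ⊤ := ENNReal.mul_ne_top (h2ne _ (by positivity))
    (ENNReal.mul_ne_top (h2ne _ (by positivity)) (by norm_num))
  refine ⟨((K₁ * K₂) ^ (Q - r) * E) ^ (1/Q), ?_, ?_⟩
  · exact ENNReal.rpow_ne_top_of_nonneg (by positivity)
      (ENNReal.mul_ne_top (ENNReal.rpow_ne_top_of_nonneg (by linarith)
        (ENNReal.mul_ne_top hK₁ne hK₂ne)) hEne)
  intro α m μ f₁ f₂ hA₁ hA₂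
  set A₁ := lorentzNorm p₁ q₁ μ f₁ with hA₁def
  set A₂ := lorentzNorm p₂ q₂ μ f₂ with hA₂def
  set H₁ : ℝ → ℝ≥0∞ := fun t => (2:ℝ≥0∞) ^ (1/p₁) * lorG μ f₁ p₁ (t/2) with hH₁def
  set H₂ : ℝ → ℝ≥0∞ := fun t => (2:ℝ≥0∞) ^ (1/p₂) * lorG μ f₂ p₂ (t/2) with hH₂def
  have hGH : ∀ᵐ t ∂nuMeas, lorG μ (fun x => f₁ x * f₂ x) p t ≤ H₁ t * H₂ t :=
    nuMeas_ae_pos.mono fun t ht => lorG_mul_le μ f₁ f₂ hp₁ hp₂ hpp ht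
  have hb : ∀ᵐ t ∂nuMeas, H₁ t * H₂ t ≤ (K₁ * K₂) * (A₁ * A₂) := by
    refine nuMeas_ae_pos.mono fun t ht => ?_
    have h1 : H₁ t ≤ K₁ * A₁ := by
      calc H₁ t ≤ (2:ℝ≥0∞) ^ (1/p₁) * ((2:ℝ≥0∞) ^ (1/p₁) * 2 * A₁) :=
            mul_le_mul' le_rfl (lorG_le_lorentzNorm μ f₁ hp₁ hq₁ (half_pos ht))
        _ = K₁ * A₁ := by rw [hK₁def]; ring
    have h2 : H₂ t ≤ K₂ * A₂ := by
      calc H₂ t ≤ (2:ℝ≥0∞) ^ (1/p₂) * ((2:ℝ≥0∞) ^ (1/p₂) * 2 * A₂) :=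
            mul_le_mul' le_rfl (lorG_le_lorentzNorm μ f₂ hp₂ hq₂ (half_pos ht))
        _ = K₂ * A₂ := by rw [hK₂def]; ring
    calc H₁ t * H₂ t ≤ (K₁ * A₁) * (K₂ * A₂) := mul_le_mul' h1 h2
      _ = (K₁ * K₂) * (A₁ * A₂) := by ring
  have hMne : (K₁ * K₂) * (A₁ * A₂) ≠ ⊤ :=
    ENNReal.mul_ne_top (ENNReal.mul_ne_top hK₁ne hK₂ne) (ENNReal.mul_ne_top hA₁ hA₂)
  have htail := tail_lemma hr0 hrQ hMne hGH hb (hhol α m μ f₁ f₂ hA₁ hA₂)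
  have hrep : lorentzNorm p q μ (fun x => f₁ x * f₂ x)
      = (∫⁻ t, (lorG μ (fun x => f₁ x * f₂ x) p t) ^ Q ∂nuMeas) ^ (1/Q) := by
    rw [lorentzNorm_eq μ _ p hqt,
      ← lintegral_nuMeas _ ((lorG_measurable μ _ hp).pow_const Q)]
  rw [hrep]
  exact finish_lemma hQ0 hr0 hrQ htail

end Main

noncomputable section Aux

lemma aux_finite (p p₁ p₂ : ℝ) (q q₁ q₂ : ℝ≥0∞)
    (hp₁ : 1 ≤ p₁) (hp₂ : 1 ≤ p₂) (hp : 1 ≤ p)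
    (hpp : 1 / p = 1 / p₁ + 1 / p₂)
    (hq₁ : 1 ≤ q₁) (hq₂ : 1 ≤ q₂) (hq : 1 ≤ q)
    (hqq : q⁻¹ ≤ q₁⁻¹ + q₂⁻¹) (hqt : q ≠ ⊤) (hq₂t : q₂ ≠ ⊤) :
    ∃ C : ℝ≥0∞, C ≠ ⊤ ∧ ∀ (α : Type) (_ : MeasurableSpace α) (μ : Measure α) (f₁ f₂ : α → ℝ),
      lorentzNorm p₁ q₁ μ f₁ ≠ ⊤ → lorentzNorm p₂ q₂ μ f₂ ≠ ⊤ →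
      lorentzNorm p q μ (fun x => f₁ x * f₂ x) ≤
        C * lorentzNorm p₁ q₁ μ f₁ * lorentzNorm p₂ q₂ μ f₂ := by
  have h2ne : ∀ y : ℝ, 0 ≤ y → ((2:ℝ≥0∞) ^ y ≠ ⊤) := fun y hy =>
    ENNReal.rpow_ne_top_of_nonneg hy (by norm_num)
  set Q := q.toReal with hQdef
  have hQ1 : 1 ≤ Q := by
    rw [hQdef, ← ENNReal.toReal_one]
    exact ENNReal.toReal_mono hqt hq
  have hQ0 : 0 < Q := by linarith
  set Q₂ := q₂.toReal with hQ₂def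
  have hQ₂1 : 1 ≤ Q₂ := by
    rw [hQ₂def, ← ENNReal.toReal_one]
    exact ENNReal.toReal_mono hq₂t hq₂
  have hQ₂0 : 0 < Q₂ := by linarith
  by_cases hq₁t : q₁ = ⊤
  · -- mixed case : `q₁ = ⊤`
    have hrQ : Q₂ ≤ Q := by
      have hle : q₂ ≤ q := by
        rw [← ENNReal.inv_le_inv]
        calc q⁻¹ ≤ q₁⁻¹ + q₂⁻¹ := hqq
          _ = q₂⁻¹ := by rw [hq₁t, ENNReal.inv_top, zero_add]
      exact ENNReal.toReal_mono hqt hle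
    set K₁ : ℝ≥0∞ := (2:ℝ≥0∞) ^ (1/p₁) * ((2:ℝ≥0∞) ^ (1/p₁) * 2) with hK₁def
    have hK₁ne : K₁ ≠ ⊤ := ENNReal.mul_ne_top (h2ne _ (by positivity))
      (ENNReal.mul_ne_top (h2ne _ (by positivity)) (by norm_num))
    apply core_lemma p p₁ p₂ q q₁ q₂ hp₁ hp₂ hp hpp hq₁ hq₂ hq hqt Q₂
      (K₁ ^ Q₂ * ((2:ℝ≥0∞) ^ (1/p₂)) ^ Q₂) hQ₂0.le hrQ
      (ENNReal.mul_ne_top (ENNReal.rpow_ne_top_of_nonneg hQ₂0.le hK₁ne)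
        (ENNReal.rpow_ne_top_of_nonneg hQ₂0.le (h2ne _ (by positivity))))
    intro α m μ f₁ f₂ hA₁ hA₂
    set A₁ := lorentzNorm p₁ q₁ μ f₁ with hA₁def
    set A₂ := lorentzNorm p₂ q₂ μ f₂ with hA₂def
    set H₁ : ℝ → ℝ≥0∞ := fun t => (2:ℝ≥0∞) ^ (1/p₁) * lorG μ f₁ p₁ (t/2) with hH₁def
    set H₂ : ℝ → ℝ≥0∞ := fun t => (2:ℝ≥0∞) ^ (1/p₂) * lorG μ f₂ p₂ (t/2) with hH₂def
    have hKA₁ne : (K₁ * A₁) ^ Q₂ ≠ ⊤ :=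
      ENNReal.rpow_ne_top_of_nonneg hQ₂0.le (ENNReal.mul_ne_top hK₁ne hA₁)
    have step1 : ∫⁻ t, (H₁ t * H₂ t) ^ Q₂ ∂nuMeas
        ≤ ∫⁻ t, (K₁ * A₁) ^ Q₂ * H₂ t ^ Q₂ ∂nuMeas := by
      apply lintegral_mono_ae
      refine nuMeas_ae_pos.mono fun t ht => ?_
      have h1 : H₁ t ≤ K₁ * A₁ := by
        calc H₁ t ≤ (2:ℝ≥0∞) ^ (1/p₁) * ((2:ℝ≥0∞) ^ (1/p₁) * 2 * A₁) :=
              mul_le_mul' le_rfl (lorG_le_lorentzNorm μ f₁ hp₁ hq₁ (half_pos ht))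
          _ = K₁ * A₁ := by rw [hK₁def]; ring
      calc (H₁ t * H₂ t) ^ Q₂ = H₁ t ^ Q₂ * H₂ t ^ Q₂ :=
            ENNReal.mul_rpow_of_nonneg _ _ hQ₂0.le
        _ ≤ (K₁ * A₁) ^ Q₂ * H₂ t ^ Q₂ :=
            mul_le_mul' (ENNReal.rpow_le_rpow h1 hQ₂0.le) le_rfl
    rw [lintegral_const_mul' _ _ hKA₁ne] at step1
    calc ∫⁻ t, (H₁ t * H₂ t) ^ Q₂ ∂nuMeas
        ≤ (K₁ * A₁) ^ Q₂ * ∫⁻ t, H₂ t ^ Q₂ ∂nuMeas := step1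
      _ = (K₁ * A₁) ^ Q₂ * (((2:ℝ≥0∞) ^ (1/p₂)) ^ Q₂ * A₂ ^ Q₂) := by
          rw [hH₂def, hQ₂def, J_lemma μ f₂ hp₂ hq₂ hq₂t]
      _ = K₁ ^ Q₂ * ((2:ℝ≥0∞) ^ (1/p₂)) ^ Q₂ * (A₁ ^ Q₂ * A₂ ^ Q₂) := by
          rw [ENNReal.mul_rpow_of_nonneg _ _ hQ₂0.le]; ring
  · -- both `q₁, q₂` finite : genuine Hölder
    set Q₁ := q₁.toReal with hQ₁def
    have hQ₁1 : 1 ≤ Q₁ := by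
      rw [hQ₁def, ← ENNReal.toReal_one]
      exact ENNReal.toReal_mono hq₁t hq₁
    have hQ₁0 : 0 < Q₁ := by linarith
    have hs0 : (0:ℝ) < 1/Q₁ + 1/Q₂ := by positivity
    set r : ℝ := (1/Q₁ + 1/Q₂)⁻¹ with hrdef
    have hr0 : 0 < r := by positivity
    have hrQ : r ≤ Q := by
      have hsum_ne : q₁⁻¹ + q₂⁻¹ ≠ ⊤ := by
        refine ENNReal.add_ne_top.mpr ⟨?_, ?_⟩
        · exact ENNReal.inv_ne_top.mpr (by intro h; rw [h] at hq₁; simp at hq₁)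
        · exact ENNReal.inv_ne_top.mpr (by intro h; rw [h] at hq₂; simp at hq₂)
      have hreal := ENNReal.toReal_mono hsum_ne hqq
      rw [ENNReal.toReal_add (ENNReal.inv_ne_top.mpr (by intro h; rw [h] at hq₁; simp at hq₁))
        (ENNReal.inv_ne_top.mpr (by intro h; rw [h] at hq₂; simp at hq₂)),
        ENNReal.toReal_inv, ENNReal.toReal_inv, ENNReal.toReal_inv] at hreal
    -- hreal : Q⁻¹ ≤ Q₁⁻¹ + Q₂⁻¹
      have h1 : r ≤ (Q⁻¹)⁻¹ := by
        rw [hrdef]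
        apply inv_anti₀ (by positivity)
        calc Q⁻¹ ≤ Q₁⁻¹ + Q₂⁻¹ := hreal
          _ = 1/Q₁ + 1/Q₂ := by rw [one_div, one_div]
      rwa [inv_inv] at h1
    have hrs : r * (1/Q₁ + 1/Q₂) = 1 := inv_mul_cancel₀ hs0.ne'
    have hab : Real.HolderConjugate (Q₁/r) (Q₂/r) := by
      rw [Real.holderConjugate_iff]
      constructor
      · have he : Q₁/r = Q₁ * (1/Q₁ + 1/Q₂) := by
          rw [hrdef, div_eq_mul_inv, inv_inv]
        rw [he, mul_add, mul_one_div, div_self hQ₁0.ne', mul_one_div]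
        have : 0 < Q₁/Q₂ := by positivity
        linarith
      · rw [inv_div, inv_div]
        calc r/Q₁ + r/Q₂ = r * (1/Q₁ + 1/Q₂) := by ring
          _ = 1 := hrs
    apply core_lemma p p₁ p₂ q q₁ q₂ hp₁ hp₂ hp hpp hq₁ hq₂ hq hqt r
      (((2:ℝ≥0∞) ^ (1/p₁)) ^ r * ((2:ℝ≥0∞) ^ (1/p₂)) ^ r) hr0.le hrQ
      (ENNReal.mul_ne_top (ENNReal.rpow_ne_top_of_nonneg hr0.le (h2ne _ (by positivity)))
        (ENNReal.rpow_ne_top_of_nonneg hr0.le (h2ne _ (by positivity))))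
    intro α m μ f₁ f₂ hA₁ hA₂
    set A₁ := lorentzNorm p₁ q₁ μ f₁ with hA₁def
    set A₂ := lorentzNorm p₂ q₂ μ f₂ with hA₂def
    set H₁ : ℝ → ℝ≥0∞ := fun t => (2:ℝ≥0∞) ^ (1/p₁) * lorG μ f₁ p₁ (t/2) with hH₁def
    set H₂ : ℝ → ℝ≥0∞ := fun t => (2:ℝ≥0∞) ^ (1/p₂) * lorG μ f₂ p₂ (t/2) with hH₂def
    have hH₁meas : Measurable H₁ :=
      measurable_const.mul ((lorG_measurable μ f₁ hp₁).comp (measurable_id.div_const 2))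
    have hH₂meas : Measurable H₂ :=
      measurable_const.mul ((lorG_measurable μ f₂ hp₂).comp (measurable_id.div_const 2))
    have key := ENNReal.lintegral_mul_le_Lp_mul_Lq nuMeas hab
      ((hH₁meas.pow_const r).aemeasurable) ((hH₂meas.pow_const r).aemeasurable)
    have lhs_eq : ∫⁻ t, ((fun t => H₁ t ^ r) * fun t => H₂ t ^ r) t ∂nuMeas
        = ∫⁻ t, (H₁ t * H₂ t) ^ r ∂nuMeas :=
      lintegral_congr fun t => by
        rw [Pi.mul_apply, ← ENNReal.mul_rpow_of_nonneg _ _ hr0.le]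
    have e₁ : ∫⁻ t, (H₁ t ^ r) ^ (Q₁/r) ∂nuMeas = ∫⁻ t, H₁ t ^ Q₁ ∂nuMeas :=
      lintegral_congr fun t => by
        rw [← ENNReal.rpow_mul, show r * (Q₁/r) = Q₁ by field_simp]
    have e₂ : ∫⁻ t, (H₂ t ^ r) ^ (Q₂/r) ∂nuMeas = ∫⁻ t, H₂ t ^ Q₂ ∂nuMeas :=
      lintegral_congr fun t => by
        rw [← ENNReal.rpow_mul, show r * (Q₂/r) = Q₂ by field_simp]
    rw [lhs_eq, e₁, e₂, one_div_div, one_div_div] at key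
    calc ∫⁻ t, (H₁ t * H₂ t) ^ r ∂nuMeas
        ≤ (∫⁻ t, H₁ t ^ Q₁ ∂nuMeas) ^ (r/Q₁) * (∫⁻ t, H₂ t ^ Q₂ ∂nuMeas) ^ (r/Q₂) := key
      _ = (((2:ℝ≥0∞) ^ (1/p₁)) ^ Q₁ * A₁ ^ Q₁) ^ (r/Q₁) *
          (((2:ℝ≥0∞) ^ (1/p₂)) ^ Q₂ * A₂ ^ Q₂) ^ (r/Q₂) := by
          rw [hH₁def, hH₂def, hQ₁def, hQ₂def, J_lemma μ f₁ hp₁ hq₁ hq₁t,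
            J_lemma μ f₂ hp₂ hq₂ hq₂t]
      _ = ((2:ℝ≥0∞) ^ (1/p₁)) ^ r * ((2:ℝ≥0∞) ^ (1/p₂)) ^ r * (A₁ ^ r * A₂ ^ r) := by
          have fact : ∀ (x B : ℝ≥0∞) (Qi : ℝ), 0 < Qi →
              (x ^ Qi * B ^ Qi) ^ (r/Qi) = x ^ r * B ^ r := by
            intro x B Qi hQi
            rw [ENNReal.mul_rpow_of_nonneg _ _ (by positivity),
              ← ENNReal.rpow_mul x, ← ENNReal.rpow_mul B,
              show Qi * (r/Qi) = r by field_simp]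
          rw [fact _ _ _ hQ₁0, fact _ _ _ hQ₂0]
          ring

end Aux

/- STATEMENT 5: Hölder's inequality in Lorentz spaces: if `1/p = 1/p₁ + 1/p₂` and
`1/q ≤ 1/q₁ + 1/q₂`, then for every measurable `U ⊆ ℝⁿ` and `f₁ ∈ L^{p₁,q₁}(U)`,
`f₂ ∈ L^{p₂,q₂}(U)` the product `f₁ f₂` lies in `L^{p,q}(U)` with
`|f₁f₂|_{L^{p,q}} ≤ C(p₁,p₂,q₁,q₂) |f₁|_{L^{p₁,q₁}} |f₂|_{L^{p₂,q₂}}`. -/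
theorem lorentz_holder (p p₁ p₂ : ℝ) (q q₁ q₂ : ℝ≥0∞)
    (hp₁ : 1 ≤ p₁) (hp₂ : 1 ≤ p₂) (hp : 1 ≤ p)
    (hpp : 1 / p = 1 / p₁ + 1 / p₂)
    (hq₁ : 1 ≤ q₁) (hq₂ : 1 ≤ q₂) (hq : 1 ≤ q)
    (hqq : q⁻¹ ≤ q₁⁻¹ + q₂⁻¹) :
    ∃ C : ℝ≥0∞, C ≠ ⊤ ∧
      ∀ (n : ℕ) (U : Set (Fin n → ℝ)), MeasurableSet U →
        ∀ f₁ f₂ : (Fin n → ℝ) → ℝ, Measurable f₁ → Measurable f₂ →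
          lorentzNorm p₁ q₁ (volume.restrict U) f₁ ≠ ⊤ →
          lorentzNorm p₂ q₂ (volume.restrict U) f₂ ≠ ⊤ →
            lorentzNorm p q (volume.restrict U) (fun x => f₁ x * f₂ x) ≤
                C * lorentzNorm p₁ q₁ (volume.restrict U) f₁ *
                  lorentzNorm p₂ q₂ (volume.restrict U) f₂ ∧
              lorentzNorm p q (volume.restrict U) (fun x => f₁ x * f₂ x) ≠ ⊤ := by
  have h2ne : ∀ y : ℝ, 0 ≤ y → ((2:ℝ≥0∞) ^ y ≠ ⊤) := fun y hy =>
    ENNReal.rpow_ne_top_of_nonneg hy (by norm_num)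
  by_cases hqt : q = ⊤
  · -- case `q = ⊤` : supremum norm
    subst hqt
    set K₁ : ℝ≥0∞ := (2:ℝ≥0∞) ^ (1/p₁) * ((2:ℝ≥0∞) ^ (1/p₁) * 2) with hK₁def
    set K₂ : ℝ≥0∞ := (2:ℝ≥0∞) ^ (1/p₂) * ((2:ℝ≥0∞) ^ (1/p₂) * 2) with hK₂def
    have hK₁ne : K₁ ≠ ⊤ := ENNReal.mul_ne_top (h2ne _ (by positivity))
      (ENNReal.mul_ne_top (h2ne _ (by positivity)) (by norm_num))
    have hK₂ne : K₂ ≠ ⊤ := ENNReal.mul_ne_top (h2ne _ (by positivity))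
      (ENNReal.mul_ne_top (h2ne _ (by positivity)) (by norm_num))
    refine ⟨K₁ * K₂, ENNReal.mul_ne_top hK₁ne hK₂ne, ?_⟩
    intro n U hU f₁ f₂ hf₁ hf₂ hA₁ hA₂
    set μ := volume.restrict U with hμdef
    set A₁ := lorentzNorm p₁ q₁ μ f₁ with hA₁def
    set A₂ := lorentzNorm p₂ q₂ μ f₂ with hA₂def
    have hbound : lorentzNorm p ⊤ μ (fun x => f₁ x * f₂ x) ≤ K₁ * K₂ * A₁ * A₂ := by
      rw [lorentzNorm_eq_top]
      apply iSup_le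
      rintro ⟨t, ht⟩
      calc lorG μ (fun x => f₁ x * f₂ x) p t
          ≤ ((2:ℝ≥0∞) ^ (1/p₁) * lorG μ f₁ p₁ (t/2)) *
            ((2:ℝ≥0∞) ^ (1/p₂) * lorG μ f₂ p₂ (t/2)) :=
            lorG_mul_le μ f₁ f₂ hp₁ hp₂ hpp ht
        _ ≤ ((2:ℝ≥0∞) ^ (1/p₁) * ((2:ℝ≥0∞) ^ (1/p₁) * 2 * A₁)) *
            ((2:ℝ≥0∞) ^ (1/p₂) * ((2:ℝ≥0∞) ^ (1/p₂) * 2 * A₂)) :=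
            mul_le_mul'
              (mul_le_mul' le_rfl (lorG_le_lorentzNorm μ f₁ hp₁ hq₁ (half_pos ht)))
              (mul_le_mul' le_rfl (lorG_le_lorentzNorm μ f₂ hp₂ hq₂ (half_pos ht)))
        _ = K₁ * K₂ * A₁ * A₂ := by rw [hK₁def, hK₂def]; ring
    exact ⟨hbound, ne_top_of_le_ne_top
      (ENNReal.mul_ne_top (ENNReal.mul_ne_top (ENNReal.mul_ne_top hK₁ne hK₂ne) hA₁) hA₂) hbound⟩
  · by_cases hq₂t : q₂ = ⊤
    · -- swap: then `q₁ ≠ ⊤`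
      have hq₁t : q₁ ≠ ⊤ := by
        intro hq₁t
        apply hqt
        have : q⁻¹ ≤ 0 := by
          calc q⁻¹ ≤ q₁⁻¹ + q₂⁻¹ := hqq
            _ = 0 := by rw [hq₁t, hq₂t, ENNReal.inv_top, zero_add]
        have h0 : q⁻¹ = 0 := le_antisymm this zero_le
        exact ENNReal.inv_eq_zero.mp h0
      obtain ⟨C, hCne, hC⟩ := aux_finite p p₂ p₁ q q₂ q₁ hp₂ hp₁ hp
        (by rw [hpp]; ring) hq₂ hq₁ hq (by rw [add_comm]; exact hqq) hqt hq₁t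
      refine ⟨C, hCne, ?_⟩
      intro n U hU f₁ f₂ hf₁ hf₂ hA₁ hA₂
      have hsw := hC (Fin n → ℝ) _ (volume.restrict U) f₂ f₁ hA₂ hA₁
      have hfg : (fun x => f₁ x * f₂ x) = (fun x => f₂ x * f₁ x) :=
        funext fun x => mul_comm _ _
      have hbound : lorentzNorm p q (volume.restrict U) (fun x => f₁ x * f₂ x) ≤
          C * lorentzNorm p₁ q₁ (volume.restrict U) f₁ *
            lorentzNorm p₂ q₂ (volume.restrict U) f₂ := by
        rw [hfg]
        calc lorentzNorm p q (volume.restrict U) (fun x => f₂ x * f₁ x)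
            ≤ C * lorentzNorm p₂ q₂ (volume.restrict U) f₂ *
              lorentzNorm p₁ q₁ (volume.restrict U) f₁ := hsw
          _ = C * lorentzNorm p₁ q₁ (volume.restrict U) f₁ *
              lorentzNorm p₂ q₂ (volume.restrict U) f₂ := by ring
      exact ⟨hbound, ne_top_of_le_ne_top
        (ENNReal.mul_ne_top (ENNReal.mul_ne_top hCne hA₁) hA₂) hbound⟩
    · obtain ⟨C, hCne, hC⟩ := aux_finite p p₁ p₂ q q₁ q₂ hp₁ hp₂ hp hpp
        hq₁ hq₂ hq hqq hqt hq₂t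
      refine ⟨C, hCne, ?_⟩
      intro n U hU f₁ f₂ hf₁ hf₂ hA₁ hA₂
      have hbound := hC (Fin n → ℝ) _ (volume.restrict U) f₁ f₂ hA₁ hA₂
      exact ⟨hbound, ne_top_of_le_ne_top
        (ENNReal.mul_ne_top (ENNReal.mul_ne_top hCne hA₁) hA₂) hbound⟩
end

section
/- Let k ≥ 1 be an integer and ε > 0. There exist R > 2 and a bounded measurable function ψ : [1,∞) → ℝ with compact support contained in [1, R^k] such that ∫₁^∞ ψ(t) t^ℓ dt = 1 if ℓ = 0 and = 0 for ℓ = 1,…,k−1, and such that ∫₁^∞ ψ⁻(t) dt ≤ ε, where ψ⁻ denotes the negative part of ψ. -/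
open MeasureTheory

section MomentKernelHelpers
open Polynomial Finset

lemma lagrange_identity (k : ℕ) (v : Fin k → ℝ) (hv : Function.Injective v)
    (ℓ : ℕ) (hℓ : ℓ < k) :
    ∑ τ : Fin k, (v τ) ^ ℓ * (Lagrange.basis Finset.univ v τ).eval 0
      = if ℓ = 0 then 1 else 0 := by
  have hdeg : (X ^ ℓ : ℝ[X]).degree < (Finset.univ : Finset (Fin k)).card := by
    rw [degree_X_pow, Finset.card_univ, Fintype.card_fin]
    exact_mod_cast hℓ
  have h := Lagrange.eq_interpolate (f := (X ^ ℓ : ℝ[X])) (hv.injOn) hdeg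
  have h0 := congrArg (Polynomial.eval 0) h
  rw [Lagrange.interpolate_apply, eval_pow, eval_X, eval_finset_sum] at h0
  simp only [eval_mul, eval_C, eval_pow, eval_X] at h0
  rw [← h0]
  rcases Nat.eq_zero_or_pos ℓ with rfl | hp
  · simp
  · simp [zero_pow hp.ne', hp.ne']

lemma eval_basis_zero (k : ℕ) (v : Fin k → ℝ) (τ : Fin k) :
    (Lagrange.basis Finset.univ v τ).eval 0
      = ∏ j ∈ Finset.univ.erase τ, (v j / (v j - v τ)) := by
  rw [Lagrange.basis, eval_prod]
  refine Finset.prod_congr rfl fun j _ => ?_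
  rw [Lagrange.basisDivisor]
  simp only [eval_mul, eval_C, eval_sub, eval_X]
  rw [zero_sub, inv_mul_eq_div, div_eq_div_iff_comm]
  · ring

lemma factor_small {R : ℝ} (hR : 2 < R) {a b : ℕ} (h : a < b) :
    R ^ a / |R ^ a - R ^ b| ≤ 1 / (R - 1) := by
  have hR0 : (0:ℝ) < R := by linarith
  have hpow : R ^ a * (R - 1) ≤ R ^ b - R ^ a := by
    have : R ^ (a+1) ≤ R ^ b := pow_le_pow_right₀ (by linarith) h
    rw [pow_succ] at this
    nlinarith [pow_pos hR0 a]
  have habs : |R ^ a - R ^ b| = R ^ b - R ^ a := by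
    rw [abs_sub_comm, abs_of_nonneg]
    nlinarith [pow_pos hR0 a]
  rw [habs, div_le_div_iff₀ (by nlinarith [pow_pos hR0 a]) (by linarith)]
  nlinarith [pow_pos hR0 a]

lemma factor_big {R : ℝ} (hR : 2 < R) {a b : ℕ} (h : b < a) :
    R ^ a / |R ^ a - R ^ b| ≤ 2 := by
  have hR0 : (0:ℝ) < R := by linarith
  have hpow : R ^ b * (R - 1) ≤ R ^ a - R ^ b := by
    have : R ^ (b+1) ≤ R ^ a := pow_le_pow_right₀ (by linarith) h
    rw [pow_succ] at this
    nlinarith [pow_pos hR0 b]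
  have h2 : R ^ a ≤ 2 * (R ^ a - R ^ b) := by
    have hba : R ^ b ≤ R ^ a := pow_le_pow_right₀ (by linarith) h.le
    have hb1 : (1:ℝ) ≤ R ^ b := one_le_pow₀ (by linarith : (1:ℝ) ≤ R)
    nlinarith [pow_pos hR0 b, pow_pos hR0 a]
  have habs : |R ^ a - R ^ b| = R ^ a - R ^ b := by
    apply abs_of_nonneg
    nlinarith [pow_pos hR0 b]
  rw [habs, div_le_iff₀ (by nlinarith [pow_pos hR0 b])]
  linarith

lemma basis_abs_bound {k : ℕ} {R : ℝ} (hR : 2 < R) (τ : Fin k) (hτ : (τ:ℕ) ≠ 0) :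
    |(Lagrange.basis Finset.univ (fun j : Fin k => R ^ (j:ℕ)) τ).eval 0|
      ≤ 2 ^ k / (R - 1) := by
  have hk : 0 < k := τ.pos
  set v : Fin k → ℝ := fun j : Fin k => R ^ (j:ℕ) with hv
  have hR0 : (0:ℝ) < R := by linarith
  rw [eval_basis_zero, Finset.abs_prod]
  have habs : ∀ j : Fin k, |v j / (v j - v τ)| = R ^ (j:ℕ) / |R ^ (j:ℕ) - R ^ (τ:ℕ)| := by
    intro j
    rw [abs_div, abs_of_nonneg (le_of_lt (pow_pos hR0 _))]
  have hmem : (⟨0, hk⟩ : Fin k) ∈ Finset.univ.erase τ := by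
    simp [Finset.mem_erase]
    exact fun h => hτ (by simp [← h])
  rw [← Finset.mul_prod_erase _ _ hmem]
  have h0 : |v ⟨0, hk⟩ / (v ⟨0, hk⟩ - v τ)| ≤ 1 / (R - 1) := by
    rw [habs]
    exact factor_small hR (Nat.pos_of_ne_zero hτ)
  have hrest : ∏ j ∈ (Finset.univ.erase τ).erase ⟨0, hk⟩, |v j / (v j - v τ)| ≤ 2 ^ k := by
    calc ∏ j ∈ (Finset.univ.erase τ).erase ⟨0, hk⟩, |v j / (v j - v τ)|
        ≤ ∏ _j ∈ (Finset.univ.erase τ).erase ⟨0, hk⟩, (2:ℝ) := by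
          apply Finset.prod_le_prod (fun j _ => abs_nonneg _)
          intro j hj
          rw [habs]
          rcases lt_or_gt_of_ne (fun h : (j:ℕ) = (τ:ℕ) => by
            simp only [Finset.mem_erase] at hj
            exact hj.2.1 (Fin.ext h)) with h | h
          · exact le_trans (factor_small hR h) (by rw [div_le_iff₀ (by linarith)]; linarith)
          · exact factor_big hR h
      _ = 2 ^ ((Finset.univ.erase τ).erase ⟨0, hk⟩).card := Finset.prod_const 2
      _ ≤ 2 ^ k := by
          apply pow_le_pow_right₀ (by norm_num)
          calc ((Finset.univ.erase τ).erase ⟨0, hk⟩).card ≤ (Finset.univ : Finset (Fin k)).card :=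
                Finset.card_le_card (fun x hx => Finset.mem_univ x)
            _ = k := by simp
  calc |v ⟨0, hk⟩ / (v ⟨0, hk⟩ - v τ)| * ∏ j ∈ (Finset.univ.erase τ).erase ⟨0, hk⟩, |v j / (v j - v τ)|
      ≤ (1 / (R - 1)) * 2 ^ k := by
        apply mul_le_mul h0 hrest (Finset.prod_nonneg fun j _ => abs_nonneg _) (le_of_lt (div_pos one_pos (by linarith)))
    _ = 2 ^ k / (R - 1) := by ring

lemma basis_zero_nonneg {k : ℕ} {R : ℝ} (hR : 2 < R) (hk : 0 < k) :
    0 ≤ (Lagrange.basis Finset.univ (fun j : Fin k => R ^ (j:ℕ)) (⟨0, hk⟩ : Fin k)).eval 0 := by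
  rw [eval_basis_zero]
  apply Finset.prod_nonneg
  intro j hj
  have hj0 : 0 < (j:ℕ) := by
    rcases Nat.eq_zero_or_pos (j:ℕ) with h | h
    swap
    · exact h
    · exfalso; simp only [Finset.mem_erase] at hj; exact hj.1 (Fin.ext h)
  apply div_nonneg (le_of_lt (pow_pos (by linarith) _))
  simp only
  have : (1:ℝ) < R ^ (j:ℕ) := by
    calc (1:ℝ) < R := by linarith
      _ = R ^ 1 := (pow_one R).symm
      _ ≤ R ^ (j:ℕ) := pow_le_pow_right₀ (by linarith) hj0
  have h2 : R ^ ((⟨0, hk⟩ : Fin k):ℕ) = 1 := by norm_num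
  rw [h2]; linarith

lemma indicator_integral (a b c : ℝ) (ha : 1 ≤ a) (hab : a ≤ b) (n : ℕ) :
    ∫ t in Set.Ioi (1:ℝ), Set.indicator (Set.Ico a b) (fun s => c * s ^ n) t
      = c * (b ^ (n+1) - a ^ (n+1)) / (n+1) := by
  rw [MeasureTheory.setIntegral_indicator measurableSet_Ico]
  have hae : (Set.Ioi (1:ℝ) ∩ Set.Ico a b : Set ℝ) =ᵐ[volume] (Set.Ioc a b : Set ℝ) := by
    rw [Filter.eventuallyEq_set]
    have hone : ∀ (c : ℝ), ∀ᵐ t : ℝ ∂volume, t ≠ c := by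
      intro c
      rw [MeasureTheory.ae_iff]
      simp only [ne_eq, not_not]
      convert Real.volume_singleton (a := c) using 2
      ext x; simp
    have h1 : ∀ᵐ t : ℝ ∂volume, t ≠ a ∧ t ≠ b := (hone a).and (hone b)
    filter_upwards [h1] with t ⟨hta, htb⟩
    simp only [Set.mem_inter_iff, Set.mem_Ioi, Set.mem_Ico, Set.mem_Ioc]
    constructor
    · rintro ⟨h1, h2, h3⟩
      exact ⟨lt_of_le_of_ne h2 (Ne.symm hta), le_of_lt h3⟩
    · rintro ⟨h1, h2⟩
      exact ⟨lt_of_le_of_lt ha h1, le_of_lt h1, lt_of_le_of_ne h2 htb⟩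
  rw [MeasureTheory.setIntegral_congr_set hae, ← intervalIntegral.integral_of_le hab]
  rw [intervalIntegral.integral_const_mul, integral_pow]
  ring

lemma indicator_integrable (a b c : ℝ) (n : ℕ) :
    MeasureTheory.IntegrableOn
      (fun t => Set.indicator (Set.Ico a b) (fun s => c * s ^ n) t) (Set.Ioi (1:ℝ)) volume := by
  apply MeasureTheory.Integrable.integrableOn
  apply MeasureTheory.IntegrableOn.integrable_indicator _ measurableSet_Ico
  have : MeasureTheory.IntegrableOn (fun s : ℝ => c * s ^ n) (Set.Icc a b) volume :=
    (Continuous.continuousOn (by continuity)).integrableOn_Icc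
  exact this.mono_set Set.Ico_subset_Icc_self

lemma maxneg_sum {ι : Type*} (s : Finset ι) (f : ι → ℝ) :
    max (-∑ i ∈ s, f i) 0 ≤ ∑ i ∈ s, max (-f i) 0 := by
  induction s using Finset.cons_induction with
  | empty => simp
  | cons a s ha ih =>
    rw [Finset.sum_cons, Finset.sum_cons]
    have h1 : max (-(f a + ∑ i ∈ s, f i)) 0 ≤ max (-f a) 0 + max (-∑ i ∈ s, f i) 0 := by
      apply max_le
      · have h2 := le_max_left (-f a) 0
        have h3 := le_max_left (-∑ i ∈ s, f i) 0
        linarith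
      · have h2 := le_max_right (-f a) 0
        have h3 := le_max_right (-∑ i ∈ s, f i) 0
        linarith
    linarith


end MomentKernelHelpers

/- STATEMENT 7: for every `k ≥ 1` and `ε > 0` there exist `R > 2` and a bounded measurable
kernel `ψ` supported in `[1, R^k]` whose moments of order `0,…,k−1` are `1,0,…,0` and whose
negative part has integral at most `ε`. -/
theorem exists_moment_kernel (k : ℕ) (hk : 1 ≤ k) (ε : ℝ) (hε : 0 < ε) :
    ∃ R : ℝ, 2 < R ∧
      ∃ ψ : ℝ → ℝ, Measurable ψ ∧ (∃ M : ℝ, ∀ t : ℝ, |ψ t| ≤ M) ∧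
        Function.support ψ ⊆ Set.Icc 1 (R ^ k) ∧
        (∀ ℓ : ℕ, ℓ < k →
          ∫ t in Set.Ioi (1 : ℝ), ψ t * t ^ ℓ = if ℓ = 0 then 1 else 0) ∧
        ∫ t in Set.Ioi (1 : ℝ), max (-ψ t) 0 ≤ ε := by
  classical
  set R : ℝ := max 3 (1 + k * 2 ^ k / ε) with hRdef
  have hR : 2 < R := lt_of_lt_of_le (by norm_num) (le_max_left _ _)
  have hR1 : (1:ℝ) < R := by linarith
  have hR0 : (0:ℝ) < R := by linarith
  set v : Fin k → ℝ := fun j => R ^ (j:ℕ) with hv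
  have hvinj : Function.Injective v := by
    intro i j h
    have hm : StrictMono (fun n : ℕ => R ^ n) := fun a b hab => pow_lt_pow_right₀ hR1 hab
    exact Fin.ext (hm.injective h)
  set Lag : Fin k → ℝ := fun τ => (Lagrange.basis Finset.univ v τ).eval 0 with hLag
  set β : Fin k → ℝ := fun τ => Lag τ / ((R - 1) * R ^ (τ:ℕ)) with hβ
  set ψ : ℝ → ℝ := fun t =>
    ∑ τ : Fin k, Set.indicator (Set.Ico (R ^ (τ:ℕ)) (R ^ ((τ:ℕ)+1))) (fun _ => β τ) t with hψ
  have hone_le : ∀ τ : Fin k, (1:ℝ) ≤ R ^ (τ:ℕ) := fun τ => one_le_pow₀ (le_of_lt hR1)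
  have hab : ∀ τ : Fin k, R ^ (τ:ℕ) ≤ R ^ ((τ:ℕ)+1) :=
    fun τ => pow_le_pow_right₀ (le_of_lt hR1) (Nat.le_succ _)
  refine ⟨R, hR, ψ, ?_, ?_, ?_, ?_, ?_⟩
  · -- measurable
    apply Finset.measurable_sum
    intro τ _
    exact measurable_const.indicator measurableSet_Ico
  · -- bounded
    refine ⟨∑ τ : Fin k, |β τ|, fun t => ?_⟩
    refine le_trans (Finset.abs_sum_le_sum_abs _ _) (Finset.sum_le_sum fun τ _ => ?_)
    by_cases h : t ∈ Set.Ico (R ^ (τ:ℕ)) (R ^ ((τ:ℕ)+1))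
    · rw [Set.indicator_of_mem h]
    · rw [Set.indicator_of_notMem h]; simp
  · -- support
    intro t ht
    have ht' : ψ t ≠ 0 := ht
    obtain ⟨τ, _, hne⟩ := Finset.exists_ne_zero_of_sum_ne_zero ht'
    have hmem : t ∈ Set.Ico (R ^ (τ:ℕ)) (R ^ ((τ:ℕ)+1)) := by
      by_contra h
      rw [Set.indicator_of_notMem h] at hne
      exact hne rfl
    refine ⟨le_trans (hone_le τ) hmem.1, le_of_lt (lt_of_lt_of_le hmem.2 ?_)⟩
    exact pow_le_pow_right₀ (le_of_lt hR1) τ.isLt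
  · -- moments
    intro ℓ hℓ
    have hrw : ∀ t : ℝ, ψ t * t ^ ℓ
        = ∑ τ : Fin k, Set.indicator (Set.Ico (R ^ (τ:ℕ)) (R ^ ((τ:ℕ)+1)))
            (fun s => β τ * s ^ ℓ) t := by
      intro t
      rw [hψ, Finset.sum_mul]
      refine Finset.sum_congr rfl fun τ _ => ?_
      by_cases h : t ∈ Set.Ico (R ^ (τ:ℕ)) (R ^ ((τ:ℕ)+1))
      · rw [Set.indicator_of_mem h, Set.indicator_of_mem h]
      · rw [Set.indicator_of_notMem h, Set.indicator_of_notMem h, zero_mul]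
    rw [MeasureTheory.integral_congr_ae (Filter.Eventually.of_forall hrw),
      MeasureTheory.integral_finset_sum _ (fun τ _ => indicator_integrable _ _ _ _)]
    have hterm : ∀ τ : Fin k,
        ∫ t in Set.Ioi (1:ℝ), Set.indicator (Set.Ico (R ^ (τ:ℕ)) (R ^ ((τ:ℕ)+1)))
          (fun s => β τ * s ^ ℓ) t
        = ((R ^ (ℓ+1) - 1) / ((ℓ+1 : ℝ) * (R - 1))) * (v τ ^ ℓ * Lag τ) := by
      intro τ
      rw [indicator_integral _ _ _ (hone_le τ) (hab τ) ℓ]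
      have hA : R ^ (τ:ℕ) ≠ 0 := (pow_pos hR0 _).ne'
      have hRm1 : R - 1 ≠ 0 := by linarith
      have hl1 : ((ℓ:ℝ) + 1) ≠ 0 := by positivity
      rw [hβ, hv]
      simp only
      rw [show R ^ ((τ:ℕ)+1) = R ^ (τ:ℕ) * R from pow_succ R _]
      field_simp
      ring
    rw [Finset.sum_congr rfl (fun τ _ => hterm τ), ← Finset.mul_sum,
      lagrange_identity k v hvinj ℓ hℓ]
    by_cases hℓ0 : ℓ = 0
    · subst hℓ0
      simp only [if_pos rfl, mul_one]
      rw [pow_one, Nat.cast_zero, zero_add, one_mul]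
      simp only [if_true, mul_one]
      exact div_self (sub_ne_zero.mpr (ne_of_gt hR1))
    · simp [hℓ0]
  · -- negative part
    have hint : ∀ τ : Fin k, MeasureTheory.IntegrableOn
        (fun t => Set.indicator (Set.Ico (R ^ (τ:ℕ)) (R ^ ((τ:ℕ)+1))) (fun _ => β τ) t)
        (Set.Ioi (1:ℝ)) volume := by
      intro τ
      have he : (fun t => Set.indicator (Set.Ico (R ^ (τ:ℕ)) (R ^ ((τ:ℕ)+1))) (fun _ => β τ) t)
          = fun t => Set.indicator (Set.Ico (R ^ (τ:ℕ)) (R ^ ((τ:ℕ)+1)))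
              (fun s => β τ * s ^ 0) t := by
        funext t; simp
      rw [he]
      exact indicator_integrable _ _ _ _
    have hψint : MeasureTheory.IntegrableOn ψ (Set.Ioi (1:ℝ)) volume := by
      rw [hψ]
      exact MeasureTheory.integrable_finset_sum _ (fun τ _ => hint τ)
    set g : ℝ → ℝ := fun t =>
      ∑ τ : Fin k, Set.indicator (Set.Ico (R ^ (τ:ℕ)) (R ^ ((τ:ℕ)+1)))
        (fun _ => max (-β τ) 0) t with hg
    have hgint : ∀ τ : Fin k, MeasureTheory.IntegrableOn
        (fun t => Set.indicator (Set.Ico (R ^ (τ:ℕ)) (R ^ ((τ:ℕ)+1)))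
          (fun _ => max (-β τ) 0) t) (Set.Ioi (1:ℝ)) volume := by
      intro τ
      have he : (fun t => Set.indicator (Set.Ico (R ^ (τ:ℕ)) (R ^ ((τ:ℕ)+1)))
            (fun _ => max (-β τ) 0) t)
          = fun t => Set.indicator (Set.Ico (R ^ (τ:ℕ)) (R ^ ((τ:ℕ)+1)))
              (fun s => max (-β τ) 0 * s ^ 0) t := by
        funext t; simp
      rw [he]
      exact indicator_integrable _ _ _ _
    have hpt : ∀ t : ℝ, max (-ψ t) 0 ≤ g t := by
      intro t
      refine le_trans (maxneg_sum _ _) (Finset.sum_le_sum fun τ _ => ?_)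
      by_cases h : t ∈ Set.Ico (R ^ (τ:ℕ)) (R ^ ((τ:ℕ)+1))
      · rw [Set.indicator_of_mem h, Set.indicator_of_mem h]
      · rw [Set.indicator_of_notMem h, Set.indicator_of_notMem h]; simp
    have hmono : ∫ t in Set.Ioi (1:ℝ), max (-ψ t) 0 ≤ ∫ t in Set.Ioi (1:ℝ), g t := by
      apply MeasureTheory.integral_mono _ _ hpt
      · exact hψint.neg.pos_part
      · exact MeasureTheory.integrable_finset_sum _ (fun τ _ => hgint τ)
    refine le_trans hmono ?_
    rw [hg, MeasureTheory.integral_finset_sum _ (fun τ _ => hgint τ)]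
    have hterm2 : ∀ τ : Fin k,
        ∫ t in Set.Ioi (1:ℝ), Set.indicator (Set.Ico (R ^ (τ:ℕ)) (R ^ ((τ:ℕ)+1)))
          (fun _ => max (-β τ) 0) t
        = max (-β τ) 0 * (R ^ ((τ:ℕ)+1) - R ^ (τ:ℕ)) := by
      intro τ
      have he : (fun t => Set.indicator (Set.Ico (R ^ (τ:ℕ)) (R ^ ((τ:ℕ)+1)))
            (fun _ => max (-β τ) 0) t)
          = fun t => Set.indicator (Set.Ico (R ^ (τ:ℕ)) (R ^ ((τ:ℕ)+1)))
              (fun s => max (-β τ) 0 * s ^ 0) t := by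
        funext t; simp
      rw [he, indicator_integral _ _ _ (hone_le τ) (hab τ) 0]
      norm_num
    rw [Finset.sum_congr rfl (fun τ _ => hterm2 τ)]
    have hbound : ∀ τ : Fin k,
        max (-β τ) 0 * (R ^ ((τ:ℕ)+1) - R ^ (τ:ℕ)) ≤ 2 ^ k / (R - 1) := by
      intro τ
      by_cases hτ0 : (τ:ℕ) = 0
      · have hk0 : 0 < k := τ.pos
        have hτ : τ = ⟨0, hk0⟩ := Fin.ext hτ0
        have hβ0 : 0 ≤ β τ := by
          rw [hβ]
          apply div_nonneg _ (mul_nonneg (by linarith) (le_of_lt (pow_pos hR0 _)))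
          rw [hLag, hτ]
          exact basis_zero_nonneg hR hk0
        have : max (-β τ) 0 = 0 := max_eq_right (by linarith)
        rw [this, zero_mul]
        exact div_nonneg (by positivity) (by linarith)
      · have hba : R ^ ((τ:ℕ)+1) - R ^ (τ:ℕ) = (R - 1) * R ^ (τ:ℕ) := by
          rw [pow_succ]; ring
        have h1 : max (-β τ) 0 ≤ |β τ| := max_le (neg_le_abs _) (abs_nonneg _)
        have h2 : |β τ| = |Lag τ| / ((R - 1) * R ^ (τ:ℕ)) := by
          rw [hβ]
          rw [abs_div, abs_of_pos (mul_pos (by linarith) (pow_pos hR0 _))]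
        calc max (-β τ) 0 * (R ^ ((τ:ℕ)+1) - R ^ (τ:ℕ))
            ≤ |β τ| * (R ^ ((τ:ℕ)+1) - R ^ (τ:ℕ)) := by
              apply mul_le_mul_of_nonneg_right h1
              rw [hba]
              exact mul_nonneg (by linarith) (le_of_lt (pow_pos hR0 _))
          _ = |Lag τ| := by
              rw [h2, hba, div_mul_eq_mul_div, mul_div_assoc,
                div_self (ne_of_gt (mul_pos (by linarith : (0:ℝ) < R - 1) (pow_pos hR0 _))),
                mul_one]
          _ ≤ 2 ^ k / (R - 1) := basis_abs_bound hR τ hτ0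
    calc ∑ τ : Fin k, max (-β τ) 0 * (R ^ ((τ:ℕ)+1) - R ^ (τ:ℕ))
        ≤ ∑ _τ : Fin k, 2 ^ k / (R - 1) := Finset.sum_le_sum fun τ _ => hbound τ
      _ = k * (2 ^ k / (R - 1)) := by
          rw [Finset.sum_const, Finset.card_univ, Fintype.card_fin, nsmul_eq_mul]
      _ ≤ ε := by
          have hRge : 1 + (k:ℝ) * 2 ^ k / ε ≤ R := le_max_right _ _
          have hRpos : (0:ℝ) < R - 1 := by linarith
          rw [mul_div_assoc', div_le_iff₀ hRpos]
          have h3 : (k:ℝ) * 2 ^ k / ε ≤ R - 1 := by linarith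
          calc (k:ℝ) * 2 ^ k = ε * ((k:ℝ) * 2 ^ k / ε) := by field_simp
            _ ≤ ε * (R - 1) := by
                apply mul_le_mul_of_nonneg_left h3 (le_of_lt hε)
end
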